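/- Let p^3 + q_1^2 and λp^3 + q_2^2 be two torus representations of the same homogeneous sextic polynomial C (with deg p = 2, deg q_i = 3), which are distinct as torus structures (i.e., (q_1, 1) ≠ ±(q_2, λ^{1/3}) up to scalar). If λ ≠ 1, then (λ−1)p^3 = (q_1−q_2)(q_1+q_2), and consequently the conic {p = 0} is reducible: p factors as a product of two linear forms l_1·l_2. -/

import Mathlib

open MvPolynomial

namespace TorusAux

variable {σ : Type*}

lemma top_comp_ne_zero {f : MvPolynomial σ ℂ} (hf : f ≠ 0) :
    homogeneousComponent f.totalDegree f ≠ 0 := by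
  obtain ⟨d, hd, hdeg⟩ := Finset.exists_mem_eq_sup f.support
    (support_nonempty.mpr hf) (fun m => m.sum fun _ e => e)
  have hdd : d.degree = f.totalDegree := by
    rw [totalDegree, hdeg]
    simp [Finsupp.degree, Finsupp.sum]
    rfl
  intro h
  have hcc : coeff d (homogeneousComponent f.totalDegree f) = coeff d f := by
    rw [coeff_homogeneousComponent, if_pos hdd]
  rw [h] at hcc
  exact (mem_support_iff.mp hd) hcc.symm

lemma comp_mul (f g : MvPolynomial σ ℂ) :
    homogeneousComponent (f.totalDegree + g.totalDegree) (f * g) =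
      homogeneousComponent f.totalDegree f * homogeneousComponent g.totalDegree g := by
  set df := f.totalDegree
  set dg := g.totalDegree
  calc homogeneousComponent (df + dg) (f * g)
      = ∑ i ∈ Finset.range (df + 1), ∑ j ∈ Finset.range (dg + 1),
          homogeneousComponent (df + dg) (homogeneousComponent i f * homogeneousComponent j g) := by
        conv_lhs => rw [← sum_homogeneousComponent f, ← sum_homogeneousComponent g]
        rw [Finset.sum_mul_sum, map_sum]
        simp_rw [map_sum]
        rfl
    _ = ∑ i ∈ Finset.range (df + 1), ∑ j ∈ Finset.range (dg + 1),
          (if i = df then (if j = dg then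
            homogeneousComponent df f * homogeneousComponent dg g else 0) else 0) := by
        refine Finset.sum_congr rfl fun i hi => Finset.sum_congr rfl fun j hj => ?_
        rw [Finset.mem_range] at hi
        rw [Finset.mem_range] at hj
        have hmem : homogeneousComponent i f * homogeneousComponent j g ∈
            homogeneousSubmodule σ ℂ (i + j) :=
          (mem_homogeneousSubmodule _ _).mpr
            ((homogeneousComponent_isHomogeneous i f).mul (homogeneousComponent_isHomogeneous j g))
        rw [homogeneousComponent_of_mem hmem]
        rcases eq_or_ne i df with rfl | hi'
        · rcases eq_or_ne j dg with rfl | hj'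
          · simp
          · rw [if_neg (by omega), if_pos rfl, if_neg hj']
        · rw [if_neg (by omega), if_neg hi']
    _ = homogeneousComponent df f * homogeneousComponent dg g := by
        rw [Finset.sum_eq_single_of_mem df (Finset.self_mem_range_succ df)
          (fun i _ hi => Finset.sum_eq_zero fun j _ => if_neg hi)]
        simp

lemma totalDegree_mul_eq {f g : MvPolynomial σ ℂ} (hf : f ≠ 0) (hg : g ≠ 0) :
    (f * g).totalDegree = f.totalDegree + g.totalDegree := by
  refine le_antisymm (totalDegree_mul f g) ?_
  by_contra h
  push_neg at h
  have h0 := homogeneousComponent_eq_zero (f.totalDegree + g.totalDegree) (f * g) h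
  rw [comp_mul] at h0
  exact mul_ne_zero (top_comp_ne_zero hf) (top_comp_ne_zero hg) h0

lemma totalDegree_of_isUnit {f : MvPolynomial σ ℂ} (h : IsUnit f) : f.totalDegree = 0 := by
  obtain ⟨u, rfl⟩ := h
  have h1 : (u : MvPolynomial σ ℂ) * (↑u⁻¹ : MvPolynomial σ ℂ) = 1 := u.mul_inv
  have h2 := totalDegree_mul_eq (u.ne_zero) (u⁻¹.ne_zero)
  rw [h1, totalDegree_one] at h2
  omega

lemma not_isUnit_of_pos {f : MvPolynomial σ ℂ} {n : ℕ} (hf : f.IsHomogeneous n)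
    (hf0 : f ≠ 0) (hn : n ≠ 0) : ¬ IsUnit f := fun h => by
  have := hf.totalDegree hf0
  rw [totalDegree_of_isUnit h] at this
  exact hn this.symm

lemma eq_C_of_totalDegree_zero {f : MvPolynomial σ ℂ} (h : f.totalDegree = 0) :
    f = MvPolynomial.C (coeff 0 f) := by
  conv_lhs => rw [← sum_homogeneousComponent f, h]
  rw [Finset.sum_range_one, homogeneousComponent_zero]

/-- factors of a nonzero homogeneous quadric into nonunits are homogeneous linear forms -/
lemma factor_homog {p f g : MvPolynomial σ ℂ} (hp : p.IsHomogeneous 2) (hp0 : p ≠ 0)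
    (hpfg : p = f * g) (hf : ¬ IsUnit f) (hg : ¬ IsUnit g) :
    f.IsHomogeneous 1 ∧ g.IsHomogeneous 1 := by
  have hf0 : f ≠ 0 := fun h => hp0 (by rw [hpfg, h, zero_mul])
  have hg0 : g ≠ 0 := fun h => hp0 (by rw [hpfg, h, mul_zero])
  have hdeg : f.totalDegree + g.totalDegree = 2 := by
    rw [← totalDegree_mul_eq hf0 hg0, ← hpfg, hp.totalDegree hp0]
  have hfpos : f.totalDegree ≠ 0 := by
    intro h
    apply hf
    rw [eq_C_of_totalDegree_zero h]
    refine IsUnit.map (MvPolynomial.C : ℂ →+* MvPolynomial σ ℂ) (isUnit_iff_ne_zero.mpr ?_)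
    intro hc
    apply hf0
    rw [eq_C_of_totalDegree_zero h, hc, map_zero]
  have hgpos : g.totalDegree ≠ 0 := by
    intro h
    apply hg
    rw [eq_C_of_totalDegree_zero h]
    refine IsUnit.map (MvPolynomial.C : ℂ →+* MvPolynomial σ ℂ) (isUnit_iff_ne_zero.mpr ?_)
    intro hc
    apply hg0
    rw [eq_C_of_totalDegree_zero h, hc, map_zero]
  have hdf : f.totalDegree = 1 := by omega
  have hdg : g.totalDegree = 1 := by omega
  -- constant coefficients multiply to the constant coefficient of p, which is 0
  have hc0 : coeff 0 f * coeff 0 g = 0 := by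
    have hcp : constantCoeff p = 0 := hp.coeff_eq_zero (by simp [Finsupp.degree])
    rw [hpfg, map_mul] at hcp
    simpa [constantCoeff_eq] using hcp
  -- decompositions
  have hfdec : f = MvPolynomial.C (coeff 0 f) + homogeneousComponent 1 f := by
    conv_lhs => rw [← sum_homogeneousComponent f, hdf]
    rw [Finset.sum_range_succ, Finset.sum_range_one, homogeneousComponent_zero]
  have hgdec : g = MvPolynomial.C (coeff 0 g) + homogeneousComponent 1 g := by
    conv_lhs => rw [← sum_homogeneousComponent g, hdg]
    rw [Finset.sum_range_succ, Finset.sum_range_one, homogeneousComponent_zero]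
  -- one of the constant terms vanishes; wlog via a helper
  have key : ∀ f' g' : MvPolynomial σ ℂ, p = f' * g' → f' ≠ 0 → g' ≠ 0 →
      f' = MvPolynomial.C (coeff 0 f') + homogeneousComponent 1 f' →
      g' = MvPolynomial.C (coeff 0 g') + homogeneousComponent 1 g' →
      coeff 0 f' = 0 → f'.IsHomogeneous 1 ∧ g'.IsHomogeneous 1 := by
    intro f' g' hpfg' hf0' hg0' hfdec' hgdec' h0
    have hf1 : f' = homogeneousComponent 1 f' := by
      conv_lhs => rw [hfdec']
      rw [h0, map_zero, zero_add]
    have hfhom : f'.IsHomogeneous 1 := by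
      rw [hf1]; exact homogeneousComponent_isHomogeneous 1 f'
    refine ⟨hfhom, ?_⟩
    -- show constant term of g' vanishes
    have hgc : coeff 0 g' = 0 := by
      by_contra hgc
      have h2 : f' * MvPolynomial.C (coeff 0 g') = p - f' * homogeneousComponent 1 g' := by
        rw [hpfg']
        linear_combination (-f') * hgdec'
      have hhom2 : (f' * MvPolynomial.C (coeff 0 g')).IsHomogeneous 2 := by
        rw [h2]
        exact hp.sub (by simpa using hfhom.mul (homogeneousComponent_isHomogeneous 1 g'))
      have hhom1 : (f' * MvPolynomial.C (coeff 0 g')).IsHomogeneous 1 := by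
        simpa using hfhom.mul (isHomogeneous_C σ (coeff 0 g'))
      have hne : f' * MvPolynomial.C (coeff 0 g') ≠ 0 :=
        mul_ne_zero hf0' (fun h => hgc (by simpa using h))
      exact absurd (hhom1.inj_right hhom2 hne) (by omega)
    have hg1 : g' = homogeneousComponent 1 g' := by
      conv_lhs => rw [hgdec']
      rw [hgc, map_zero, zero_add]
    rw [hg1]; exact homogeneousComponent_isHomogeneous 1 g'
  rcases mul_eq_zero.mp hc0 with h0 | h0
  · exact key f g hpfg hf0 hg0 hfdec hgdec h0
  · have := key g f (by rw [hpfg, mul_comm]) hg0 hf0 hgdec hfdec h0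
    exact ⟨this.2, this.1⟩

end TorusAux

/-- Two distinct torus structures `p^3 + q₁^2 = λ p^3 + q₂^2` of the same sextic with
`λ ≠ 1` force `(λ-1)p^3 = (q₁-q₂)(q₁+q₂)` and the conic `{p = 0}` is reducible. -/
theorem stmt_0 (p q₁ q₂ : MvPolynomial (Fin 3) ℂ) (l : ℂ)
    (hp : p.IsHomogeneous 2) (hq₁ : q₁.IsHomogeneous 3) (hq₂ : q₂.IsHomogeneous 3)
    (hdist : q₁ ≠ q₂ ∧ q₁ ≠ -q₂) (hl : l ≠ 1)
    (heq : p ^ 3 + q₁ ^ 2 = C l * p ^ 3 + q₂ ^ 2) :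
    C (l - 1) * p ^ 3 = (q₁ - q₂) * (q₁ + q₂) ∧
      ∃ l₁ l₂ : MvPolynomial (Fin 3) ℂ,
        l₁.IsHomogeneous 1 ∧ l₂.IsHomogeneous 1 ∧ p = l₁ * l₂ := by
  have hkey : C (l - 1) * p ^ 3 = (q₁ - q₂) * (q₁ + q₂) := by
    rw [map_sub, map_one]
    linear_combination -heq
  refine ⟨hkey, ?_⟩
  have hc : l - 1 ≠ 0 := sub_ne_zero.mpr hl
  have hA0 : q₁ - q₂ ≠ 0 := sub_ne_zero.mpr hdist.1
  have hB0 : q₁ + q₂ ≠ 0 := fun h => hdist.2 (eq_neg_of_add_eq_zero_left h)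
  have hAh : (q₁ - q₂).IsHomogeneous 3 := hq₁.sub hq₂
  have hBh : (q₁ + q₂).IsHomogeneous 3 := hq₁.add hq₂
  have hp0 : p ≠ 0 := by
    intro h
    rw [h] at hkey
    simp only [zero_pow, mul_zero, ne_eq, OfNat.ofNat_ne_zero, not_false_eq_true] at hkey
    rcases mul_eq_zero.mp hkey.symm with h' | h'
    · exact hA0 h'
    · exact hB0 h'
  have hnirr : ¬ Irreducible p := by
    intro hirr
    have hprime : Prime p := (UniqueFactorizationMonoid.irreducible_iff_prime).mp hirr
    have main : ∀ A B : MvPolynomial (Fin 3) ℂ, A ≠ 0 → B ≠ 0 → A.IsHomogeneous 3 →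
        B.IsHomogeneous 3 → C (l - 1) * p ^ 3 = A * B → p ∣ A → False := by
      intro A B hA hB hAhom hBhom hk hdvd
      obtain ⟨a, ha⟩ := hdvd
      have ha0 : a ≠ 0 := fun h => hA (by rw [ha, h, mul_zero])
      have hda : a.totalDegree = 1 := by
        have h' := TorusAux.totalDegree_mul_eq hp0 ha0
        rw [← ha, hAhom.totalDegree hA, hp.totalDegree hp0] at h'
        omega
      have h1 : C (l - 1) * p ^ 2 = a * B := by
        apply mul_left_cancel₀ hp0
        rw [ha] at hk
        linear_combination hk
      have hdvd2 : p ∣ a * B := ⟨C (l - 1) * p, by linear_combination -h1⟩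
      rcases hprime.2.2 a B hdvd2 with hpa | hpB
      · obtain ⟨t, ht⟩ := hpa
        have ht0 : t ≠ 0 := fun h => ha0 (by rw [ht, h, mul_zero])
        have h' := TorusAux.totalDegree_mul_eq hp0 ht0
        rw [← ht, hda, hp.totalDegree hp0] at h'
        omega
      · obtain ⟨b, hb⟩ := hpB
        have hb0 : b ≠ 0 := fun h => hB (by rw [hb, h, mul_zero])
        have hdb : b.totalDegree = 1 := by
          have h' := TorusAux.totalDegree_mul_eq hp0 hb0
          rw [← hb, hBhom.totalDegree hB, hp.totalDegree hp0] at h'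
          omega
        have h2 : C (l - 1) * p = a * b := by
          apply mul_left_cancel₀ hp0
          rw [hb] at h1
          linear_combination h1
        have h3 : p = (C (l - 1)⁻¹ * a) * b := by
          have h4 : (C (l - 1)⁻¹ : MvPolynomial (Fin 3) ℂ) * (C (l - 1) * p)
              = C (l - 1)⁻¹ * (a * b) := by rw [h2]
          rw [← mul_assoc, ← map_mul, inv_mul_cancel₀ hc, map_one, one_mul] at h4
          rw [h4]; ring
        have hC0 : (C (l - 1)⁻¹ : MvPolynomial (Fin 3) ℂ) ≠ 0 :=
          fun h => (inv_ne_zero hc) (by simpa using h)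
        rcases hirr.2 h3 with hu | hu
        · have h5 := TorusAux.totalDegree_of_isUnit hu
          rw [TorusAux.totalDegree_mul_eq hC0 ha0, totalDegree_C, hda] at h5
          omega
        · have h5 := TorusAux.totalDegree_of_isUnit hu
          rw [hdb] at h5
          omega
    have pdvd : p ∣ (q₁ - q₂) * (q₁ + q₂) := ⟨C (l - 1) * p ^ 2, by linear_combination -hkey⟩
    rcases hprime.2.2 _ _ pdvd with h | h
    · exact main _ _ hA0 hB0 hAh hBh hkey h
    · exact main _ _ hB0 hA0 hBh hAh (by rw [hkey]; ring) h
  have hnu : ¬ IsUnit p := TorusAux.not_isUnit_of_pos hp hp0 two_ne_zero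
  rw [irreducible_iff] at hnirr
  push_neg at hnirr
  obtain ⟨f, g, hfg, hfu, hgu⟩ := hnirr hnu
  obtain ⟨hf1, hg1⟩ := TorusAux.factor_homog hp hp0 hfg hfu hgu
  exact ⟨f, g, hf1, hg1, hfg⟩
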